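/- Let c_L, ρ, κ, ς̃² > 0, ψ, μ ≥ 0 with ψ+μ = 1, w_d ∈ (−1,1), a_L > 0, and set b_L = ς̃² ρ κ / (2 c_L (ψ+μ)). Then the function f_{L,∞}(w̃) = (a_L/(1−w̃²)²) · exp( −(2/b_L) ∫₀^{w̃} (z−w_d)/(1−z²)² dz ), defined for w̃ ∈ (−1,1), satisfies the stationary equation (2(ψ+μ)/κ)(w_d − w̃) f_{L,∞}(w̃) = (1/2)(ς̃² ρ/c_L) · d/dw̃ [ (1−w̃²)² f_{L,∞}(w̃) ] for all w̃ ∈ (−1,1). -/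

import Mathlib

open Set MeasureTheory intervalIntegral

/-- Explicit steady state profile of the leaders' Fokker-Planck equation. -/
noncomputable def leadersSteadyState (a bcoef wd : ℝ) (w : ℝ) : ℝ :=
  a/(1 - w^2)^2 * Real.exp (-(2/bcoef) * ∫ z in (0:ℝ)..w, (z - wd)/(1 - z^2)^2)

/-- the explicit profile `f_{L,∞}` solves the stationary
equation of the leaders' Fokker-Planck equation on `(-1,1)`. -/
theorem leaders_steady_state
    (cL ρ κ ςt2 : ℝ) (hcL : 0 < cL) (hρ : 0 < ρ) (hκ : 0 < κ) (hςt2 : 0 < ςt2)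
    (ψ μ : ℝ) (hψ : 0 ≤ ψ) (hμ : 0 ≤ μ) (hψμ : ψ + μ = 1)
    (wd : ℝ) (hwd : wd ∈ Ioo (-1:ℝ) 1)
    (aL : ℝ) (haL : 0 < aL)
    (bL : ℝ) (hbL : bL = ςt2*ρ*κ/(2*cL*(ψ + μ))) :
    ∀ w ∈ Ioo (-1:ℝ) 1,
      DifferentiableAt ℝ (fun x => (1 - x^2)^2 * leadersSteadyState aL bL wd x) w
      ∧ (2*(ψ + μ)/κ)*(wd - w)*(leadersSteadyState aL bL wd w)
        = (1/2)*(ςt2*ρ/cL)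
          * deriv (fun x => (1 - x^2)^2 * leadersSteadyState aL bL wd x) w := by
  intro w hw
  have hbLpos : 0 < bL := by
    rw [hbL, hψμ]; positivity
  set g : ℝ → ℝ := fun z => (z - wd)/(1 - z^2)^2 with hg
  have hden : ∀ x ∈ Ioo (-1:ℝ) 1, (1 - x^2) ≠ 0 := by
    intro x hx; obtain ⟨h1, h2⟩ := hx; nlinarith
  have hdw : (1 - w^2) ≠ 0 := hden w hw
  have hgcont : ContinuousOn g (Ioo (-1:ℝ) 1) := by
    apply ContinuousOn.div (by fun_prop) (by fun_prop)
    intro x hx; exact pow_ne_zero 2 (hden x hx)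
  have hsub : Set.uIcc (0:ℝ) w ⊆ Ioo (-1:ℝ) 1 :=
    Set.OrdConnected.uIcc_subset Set.ordConnected_Ioo ⟨by norm_num, by norm_num⟩ hw
  have hint : IntervalIntegrable g volume 0 w :=
    (hgcont.mono hsub).intervalIntegrable
  have hgw : ContinuousAt g w := by
    apply ContinuousAt.div (by fun_prop) (by fun_prop)
    exact pow_ne_zero 2 hdw
  have hmeas : StronglyMeasurableAtFilter g (nhds w) volume := by
    refine ⟨Ioo (-1:ℝ) 1, isOpen_Ioo.mem_nhds hw, ?_⟩
    exact hgcont.aestronglyMeasurable isOpen_Ioo.measurableSet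
  have hF : HasDerivAt (fun u => ∫ x in (0:ℝ)..u, g x) (g w) w :=
    intervalIntegral.integral_hasDerivAt_right hint hmeas hgw
  -- the product (1-x²)² * f equals aL * exp(...) near w
  have hG : HasDerivAt (fun u => aL * Real.exp (-(2/bL) * ∫ x in (0:ℝ)..u, g x))
      (aL * Real.exp (-(2/bL) * ∫ x in (0:ℝ)..w, g x) * (-(2/bL) * g w)) w := by
    have := ((hF.const_mul (-(2/bL))).exp).const_mul aL
    exact this.congr_deriv (by ring)
  have heq : (fun x => (1 - x^2)^2 * leadersSteadyState aL bL wd x) =ᶠ[nhds w]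
      (fun u => aL * Real.exp (-(2/bL) * ∫ x in (0:ℝ)..u, g x)) := by
    filter_upwards [isOpen_Ioo.mem_nhds hw] with x hx
    have hdx := hden x hx
    simp only [leadersSteadyState]
    field_simp
    rfl
  have hG' : HasDerivAt (fun x => (1 - x^2)^2 * leadersSteadyState aL bL wd x)
      (aL * Real.exp (-(2/bL) * ∫ x in (0:ℝ)..w, g x) * (-(2/bL) * g w)) w :=
    hG.congr_of_eventuallyEq heq
  refine ⟨hG'.differentiableAt, ?_⟩
  rw [hG'.deriv]
  simp only [leadersSteadyState, hg, hψμ]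
  have hbL' : ςt2*ρ/cL * (1/bL) = 2/κ := by
    rw [hbL, hψμ]
    field_simp
  have h4 : (1 - w^2)^2 ≠ 0 := pow_ne_zero 2 hdw
  have hbL2 : 2*cL*bL = ςt2*ρ*κ := by
    rw [hbL, hψμ]; field_simp
  field_simp
  linear_combination (wd - w) * hbL2
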